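/- With the automaton of the previous context, define q ∼ₙ p iff q, p ∈ ℤ and q ≡ p (mod 2ⁿ). Then for every letter a ∈ A and states q ∼ₙ p (with n ≥ 1), we have δ(q,a) ∼ₙ₋₁ δ(p,a) or both δ(q,a) = δ(p,a) = ⊥; consequently states equivalent under ∼ₙ accept the same words of length at most n, and the relations ∼ₙ are pairwise distinct for all n (they never stabilize). -/
import Mathlib


/-- Alphabet symbols: `start`, and binary digits `b0`, `b1`. -/
inductive Sym19 where
  | start : Sym19
  | b0 : Sym19
  | b1 : Sym19
deriving DecidableEq

/-- States: integers, the initial state `eps`, and the sink `bot`. -/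
inductive St19 where
  | int : ℤ → St19
  | eps : St19
  | bot : St19
deriving DecidableEq

/-- The digit value of a symbol. -/
def symVal19 : Sym19 → ℤ
  | Sym19.start => 0
  | Sym19.b0 => 0
  | Sym19.b1 => 1

/-- Transition function of the automaton. -/
def delta19 : St19 → Sym19 × ℤ → St19
  | St19.eps, (Sym19.start, i) => St19.int i
  | St19.eps, (Sym19.b0, _) => St19.bot
  | St19.eps, (Sym19.b1, _) => St19.bot
  | St19.int i, (σ, j) =>
      if σ = Sym19.start then St19.bot
      else if (i - j - symVal19 σ) % 2 = 0 then St19.int ((i - j - symVal19 σ) / 2 + j)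
      else St19.bot
  | St19.bot, _ => St19.bot

/-- The relation `∼ₙ`: two integer states congruent mod `2ⁿ` are related, and every state is
related to itself. -/
def simRel19 (n : ℕ) (q p : St19) : Prop :=
  (∃ a b : ℤ, q = St19.int a ∧ p = St19.int b ∧ ((2 : ℤ) ^ n) ∣ a - b) ∨ q = p

lemma step19 (n : ℕ) (a : Sym19 × ℤ) (q p : St19)
    (h : simRel19 (n + 1) q p) : simRel19 n (delta19 q a) (delta19 p a) := by
  rcases h with ⟨x, y, rfl, rfl, ⟨k, hk⟩⟩ | rfl
  · obtain ⟨σ, j⟩ := a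
    by_cases hs : σ = Sym19.start
    · subst hs; right; simp [delta19]
    · have hpar : (x - j - symVal19 σ) % 2 = (y - j - symVal19 σ) % 2 := by
        have : x - j - symVal19 σ = (y - j - symVal19 σ) + 2 * (2 ^ n * k) := by
          have : x = y + 2 ^ (n+1) * k := by linarith
          rw [this]; ring
        rw [this]; omega
      by_cases he : (x - j - symVal19 σ) % 2 = 0
      · left
        refine ⟨(x - j - symVal19 σ) / 2 + j, (y - j - symVal19 σ) / 2 + j, ?_, ?_, ?_⟩
        · simp [delta19, hs, he]
        · simp [delta19, hs, hpar ▸ he]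
        · refine ⟨k, ?_⟩
          have h2x : (2:ℤ) ∣ (x - j - symVal19 σ) := Int.dvd_of_emod_eq_zero he
          have h2y : (2:ℤ) ∣ (y - j - symVal19 σ) := Int.dvd_of_emod_eq_zero (hpar ▸ he)
          obtain ⟨u, hu⟩ := h2x
          obtain ⟨v, hv⟩ := h2y
          have huv : u - v = 2 ^ n * k := by
            have hxd : x = y + 2 ^ (n+1) * k := by linarith
            have : 2 * u - 2 * v = 2 * (2 ^ n * k) := by
              rw [← hu, ← hv, hxd]; ring
            linarith
          rw [hu, hv, Int.mul_ediv_cancel_left _ (by norm_num), Int.mul_ediv_cancel_left _ (by norm_num)]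
          linarith
      · right
        have he' : ¬ (y - j - symVal19 σ) % 2 = 0 := fun h => he (hpar ▸ h)
        simp [delta19, hs, he, he']
  · right; rfl

lemma mono19 {m n : ℕ} (h : m ≤ n) {q p : St19} (hr : simRel19 n q p) : simRel19 m q p := by
  rcases hr with ⟨a, b, rfl, rfl, hd⟩ | rfl
  · exact Or.inl ⟨a, b, rfl, rfl, dvd_trans (pow_dvd_pow 2 h) hd⟩
  · exact Or.inr rfl

lemma words19 : ∀ (w : List (Sym19 × ℤ)) (n : ℕ) (q p : St19), simRel19 n q p →
    w.length ≤ n → simRel19 0 (w.foldl delta19 q) (w.foldl delta19 p) := by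
  intro w
  induction w with
  | nil => intro n q p h _; exact mono19 (Nat.zero_le n) h
  | cons a w ih =>
    intro n q p h hl
    obtain ⟨n', rfl⟩ : ∃ n', n = n' + 1 := ⟨n - 1, by simp at hl; omega⟩
    simp only [List.foldl_cons]
    exact ih n' _ _ (step19 n' a q p h) (by simp at hl; omega)

/-- States equivalent under `∼ₙ₊₁` go to states equivalent under `∼ₙ`; consequently states
equivalent under `∼ₙ` accept the same words of length at most `n`; and the relations `∼ₙ`
never stabilize: for each `n` some pair is `∼ₙ`-equivalent but not `∼ₙ₊₁`-equivalent. -/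
theorem stmt_19 :
    (∀ (n : ℕ) (a : Sym19 × ℤ) (q p : St19),
      simRel19 (n + 1) q p → simRel19 n (delta19 q a) (delta19 p a)) ∧
    (∀ (n : ℕ) (q p : St19), simRel19 n q p →
      ∀ w : List (Sym19 × ℤ), w.length ≤ n →
        ((∃ m : ℤ, w.foldl delta19 q = St19.int m) ↔
         (∃ m : ℤ, w.foldl delta19 p = St19.int m))) ∧
    (∀ n : ℕ, ∃ q p : St19, simRel19 n q p ∧ ¬ simRel19 (n + 1) q p) := by
  refine ⟨step19, ?_, ?_⟩
  · intro n q p h w hl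
    rcases words19 w n q p h hl with ⟨a, b, ha, hb, _⟩ | heq
    · simp [ha, hb]
    · rw [heq]
  · intro n
    refine ⟨St19.int 0, St19.int (2 ^ n), Or.inl ⟨0, 2 ^ n, rfl, rfl, ⟨-1, by ring⟩⟩, ?_⟩
    rintro (⟨a, b, ha, hb, hd⟩ | heq)
    · injection ha with ha; injection hb with hb
      subst ha; subst hb
      have : (2:ℤ) ^ (n+1) ∣ 2 ^ n := by simpa using hd
      have := Int.le_of_dvd (by positivity) this
      have h2 : (2:ℤ) ^ n < 2 ^ (n+1) := by
        have : (2:ℤ)^n > 0 := by positivity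
        calc (2:ℤ)^n < 2^n * 2 := by linarith
        _ = 2^(n+1) := by ring
      linarith
    · simp at heq
      have : (2:ℤ) ^ n > 0 := by positivity
      omega
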